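/- arXiv:1802.08162 — 2 statements merged into one kernel-verified Lean document; each statement's English description precedes it below -/
import Mathlib

section
/- For an odd prime power q with q ≡ ±1 (mod 8), the number of involutions in PSL(2,q) equals q(q+ε)/2, where ε = ±1 satisfies q ≡ ε (mod 8). -/
open Matrix

namespace CardInvAux

variable {F : Type*} [Field F] [Fintype F] [DecidableEq F]

local notation "SL2" => Matrix.SpecialLinearGroup (Fin 2) F

lemma det_entries (A : SL2) : A.1 0 0 * A.1 1 1 - A.1 0 1 * A.1 1 0 = 1 := by
  have := A.2; rwa [Matrix.det_fin_two] at this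

lemma sq_eq (A : SL2) : A.1 * A.1 = A.1.trace • A.1 - 1 := by
  have h := det_entries A
  ext i j
  fin_cases i <;> fin_cases j <;>
    simp [Matrix.mul_apply, Fin.sum_univ_two, Matrix.trace_fin_two, Matrix.one_apply,
      Matrix.smul_apply, smul_eq_mul, Matrix.sub_apply] <;>
    (first | linear_combination -h | linear_combination h | linear_combination 2*h | linear_combination -2*h | ring1)

lemma mem_center_iff' (A : SL2) :
    A ∈ Subgroup.center (Matrix.SpecialLinearGroup (Fin 2) F) ↔ A.1 = 1 ∨ A.1 = -1 := by
  rw [Matrix.SpecialLinearGroup.mem_center_iff]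
  constructor
  · rintro ⟨r, hr, hA⟩
    have hr2 : r = 1 ∨ r = -1 := mul_self_eq_one_iff.mp (by
      have : r ^ 2 = 1 := by simpa [Fintype.card_fin] using hr
      rwa [sq] at this)
    have hd : (Matrix.diagonal (fun _ : Fin 2 => (-1:F))) = -1 := by
      ext i j; by_cases hij : i = j <;> simp [Matrix.diagonal, Matrix.one_apply, hij]
    rcases hr2 with h1 | h1 <;> [left; right] <;> rw [← hA, h1] <;>
      simp only [_root_.map_one, _root_.map_neg]
  · rintro (h | h)
    · exact ⟨1, by simp, by rw [h]; simp⟩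
    · refine ⟨-1, by simp [Fintype.card_fin], ?_⟩
      rw [h]
      ext i j; by_cases hij : i = j <;> simp [Matrix.scalar, Matrix.diagonal, Matrix.one_apply, hij]

set_option linter.unusedSectionVars false

local notation "PSL2" => Matrix.SpecialLinearGroup (Fin 2) F ⧸
  Subgroup.center (Matrix.SpecialLinearGroup (Fin 2) F)

lemma ne_zero_of_SL (A : SL2) : A.1 ≠ 0 := by
  intro h0
  have := A.2
  rw [h0] at this
  simp at this

lemma orderOf_mk_eq_two_iff (hchar : ringChar F ≠ 2) (A : SL2) :
    orderOf (QuotientGroup.mk A : PSL2) = 2 ↔ A.1.trace = 0 := by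
  have h2F : (2 : F) ≠ 0 := Ring.two_ne_zero hchar
  have hmkpow : (QuotientGroup.mk A : PSL2) ^ 2 = QuotientGroup.mk (A ^ 2) := rfl
  have hsq2 : (A ^ 2).1 = A.1 * A.1 := by rw [pow_two]; rfl
  constructor
  · intro h
    have hne : (QuotientGroup.mk A : PSL2) ≠ 1 := by
      intro h1; rw [h1] at h; simp at h
    have hA_nc : A ∉ Subgroup.center (Matrix.SpecialLinearGroup (Fin 2) F) := by
      intro hc; exact hne ((QuotientGroup.eq_one_iff A).mpr hc)
    have hpow := pow_orderOf_eq_one (QuotientGroup.mk A : PSL2)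
    rw [h, hmkpow, QuotientGroup.eq_one_iff] at hpow
    rcases (mem_center_iff' (A ^ 2)).mp hpow with h1 | h1 <;> rw [hsq2, sq_eq A] at h1
    · -- A² = 1 : leads to A central, contradiction
      have ht : A.1.trace • A.1 = (2 : F) • (1 : Matrix (Fin 2) (Fin 2) F) := by
        have := sub_eq_iff_eq_add.mp h1
        rw [this]; ext i j; by_cases hij : i = j <;>
          simp [Matrix.one_apply, hij, Matrix.smul_apply]; ring
      have htne : A.1.trace ≠ 0 := by
        intro h0
        rw [h0, zero_smul] at ht
        have := congrArg (fun M => M 0 0) ht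
        simp [Matrix.one_apply] at this
        exact h2F this.symm
      have hAs : A.1 = (A.1.trace⁻¹ * 2) • (1 : Matrix (Fin 2) (Fin 2) F) := by
        rw [mul_smul, ← ht, smul_smul, inv_mul_cancel₀ htne, one_smul]
      set s : F := A.1.trace⁻¹ * 2 with hs
      have hdet : s ^ 2 = 1 := by
        have := A.2
        rw [hAs] at this
        simpa [Matrix.det_smul] using this
      have : A.1 = 1 ∨ A.1 = -1 := by
        rcases mul_self_eq_one_iff.mp (show s * s = 1 by rw [← sq]; exact hdet) with h' | h' <;>
          [left; right] <;> rw [hAs, h'] <;> simp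
      exact absurd ((mem_center_iff' A).mpr this) hA_nc
    · -- A² = -1 : trace = 0
      have : A.1.trace • A.1 = 0 := by
        have := h1
        rw [sub_eq_iff_eq_add] at this
        simpa using this
      rcases smul_eq_zero.mp this with h' | h'
      · exact h'
      · exact absurd h' (ne_zero_of_SL A)
  · intro htr
    have hAsq : A.1 * A.1 = -1 := by rw [sq_eq A, htr]; simp
    have hc : (A ^ 2) ∈ Subgroup.center (Matrix.SpecialLinearGroup (Fin 2) F) := by
      rw [mem_center_iff', hsq2, hAsq]; right; rfl
    have hpow : (QuotientGroup.mk A : PSL2) ^ 2 = 1 := by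
      rw [hmkpow, QuotientGroup.eq_one_iff]; exact hc
    have hne : (QuotientGroup.mk A : PSL2) ≠ 1 := by
      rw [Ne, QuotientGroup.eq_one_iff, mem_center_iff']
      rintro (h | h) <;> rw [h] at htr <;>
        simp [Matrix.trace_fin_two] at htr <;>
      · apply h2F
        linear_combination htr
    exact orderOf_eq_prime hpow hne

/-- Trace-zero elements of SL₂ are parametrized by `(a, b, c)` with `b * c = -(a² + 1)`. -/
def traceZeroEquiv : {A : SL2 // A.1.trace = 0} ≃
    {v : F × F × F // v.2.1 * v.2.2 = -(v.1 ^ 2 + 1)} where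
  toFun A := ⟨(A.1.1 0 0, A.1.1 0 1, A.1.1 1 0), by
    have hd := det_entries A.1
    have ht := A.2
    rw [Matrix.trace_fin_two] at ht
    linear_combination -hd + A.1.1 0 0 * ht⟩
  invFun v := ⟨⟨!![v.1.1, v.1.2.1; v.1.2.2, -v.1.1], by
      rw [Matrix.det_fin_two_of]; linear_combination -v.2⟩, by
      simp [Matrix.trace_fin_two]⟩
  left_inv A := by
    apply Subtype.ext; apply Subtype.ext
    have ht := A.2
    rw [Matrix.trace_fin_two] at ht
    have h11 : A.1.1 1 1 = -A.1.1 0 0 := by linear_combination ht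
    show !![A.1.1 0 0, A.1.1 0 1; A.1.1 1 0, -A.1.1 0 0] = A.1.1
    conv_rhs => rw [Matrix.eta_fin_two A.1.1]
    rw [h11]
  right_inv v := by apply Subtype.ext; simp

/-- For `d ≠ 0`, pairs with product `d` biject with nonzero elements. -/
def fiberMulEquiv (d : F) (hd : d ≠ 0) : {bc : F × F // bc.1 * bc.2 = d} ≃ {b : F // b ≠ 0} where
  toFun x := ⟨x.1.1, fun h => hd (by rw [← x.2, h, zero_mul])⟩
  invFun b := ⟨(b.1, b.1⁻¹ * d), by rw [← mul_assoc, mul_inv_cancel₀ b.2, one_mul]⟩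
  left_inv x := by
    obtain ⟨⟨b, c⟩, h⟩ := x
    have hb : b ≠ 0 := fun h0 => hd (by rw [← h, h0, zero_mul])
    apply Subtype.ext
    show (b, b⁻¹ * d) = (b, c)
    rw [← h, ← mul_assoc, inv_mul_cancel₀ hb, one_mul]
  right_inv b := rfl

lemma card_subtype_ne_zero : Fintype.card {b : F // b ≠ 0} = Fintype.card F - 1 := by
  rw [Fintype.card_subtype_compl, Fintype.card_subtype_eq]

lemma card_fiber_ne (d : F) (hd : d ≠ 0) :
    Fintype.card {bc : F × F // bc.1 * bc.2 = d} = Fintype.card F - 1 := by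
  rw [Fintype.card_congr (fiberMulEquiv d hd), card_subtype_ne_zero]

lemma card_fiber_zero :
    Fintype.card {bc : F × F // bc.1 * bc.2 = (0 : F)} = 2 * Fintype.card F - 1 := by
  have e : {bc : F × F // ¬ bc.1 * bc.2 = 0} ≃ {b : F // b ≠ 0} × {b : F // b ≠ 0} :=
    (Equiv.subtypeEquivRight (fun bc => by simp [mul_eq_zero, not_or])).trans
      (Equiv.subtypeProdEquivProd)
  have h1 : Fintype.card {bc : F × F // ¬ bc.1 * bc.2 = 0} =
      (Fintype.card F - 1) * (Fintype.card F - 1) := by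
    rw [Fintype.card_congr e, Fintype.card_prod, card_subtype_ne_zero]
  have h2 := Fintype.card_subtype_compl (fun bc : F × F => bc.1 * bc.2 = 0)
  rw [h1, Fintype.card_prod] at h2
  have hle : Fintype.card {bc : F × F // bc.1 * bc.2 = 0} ≤ Fintype.card F * Fintype.card F := by
    rw [← Fintype.card_prod]; exact Fintype.card_subtype_le _
  generalize hC : Fintype.card {bc : F × F // bc.1 * bc.2 = 0} = C at h2 hle ⊢
  generalize hq : Fintype.card F = q at h2 hle ⊢
  obtain ⟨k, rfl⟩ : ∃ k, q = k + 1 := ⟨q - 1, by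
    have : 0 < q := hq ▸ Fintype.card_pos
    omega⟩
  have hx : (k + 1) * (k + 1) = k * k + 2 * k + 1 := by ring
  have hy : (k + 1 - 1) * (k + 1 - 1) = k * k := by simp
  rw [hy, hx] at h2
  omega

def negOne : SL2 :=
  ⟨-1, by rw [show (-1 : Matrix (Fin 2) (Fin 2) F) = -(1 : Matrix (Fin 2) (Fin 2) F) from rfl,
    Matrix.det_neg]; simp⟩

/-- The natural 2-to-1 map from trace-zero elements of SL₂ to involutions of PSL₂. -/
def toInv (hchar : ringChar F ≠ 2) :
    {A : SL2 // A.1.trace = 0} → {x : PSL2 // orderOf x = 2} :=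
  fun A => ⟨QuotientGroup.mk A.1, (orderOf_mk_eq_two_iff hchar A.1).mpr A.2⟩

lemma card_fiber_toInv (hchar : ringChar F ≠ 2) (y : {x : PSL2 // orderOf x = 2}) :
    Nat.card {A : {A : SL2 // A.1.trace = 0} // toInv hchar A = y} = 2 := by
  have h2F : (2 : F) ≠ 0 := Ring.two_ne_zero hchar
  obtain ⟨B, hB⟩ := QuotientGroup.mk_surjective y.1
  have htrB : B.1.trace = 0 := (orderOf_mk_eq_two_iff hchar B).mp (by rw [hB]; exact y.2)
  have hcen : negOne (F := F) ∈ Subgroup.center (Matrix.SpecialLinearGroup (Fin 2) F) :=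
    (mem_center_iff' _).mpr (Or.inr rfl)
  have hBneg : (B * negOne).1 = -B.1 := by
    show B.1 * (-1) = -B.1; simp
  have htrBneg : (B * negOne).1.trace = 0 := by rw [hBneg, Matrix.trace_neg, htrB, neg_zero]
  have hmkneg : (QuotientGroup.mk (B * negOne) : PSL2) = QuotientGroup.mk B := by
    rw [QuotientGroup.mk_mul, (QuotientGroup.eq_one_iff _).mpr hcen, mul_one]
  rw [Nat.card_eq_two_iff]
  have hane : B.1 ≠ -B.1 := by
    intro h
    have h2 : (2 : F) • B.1 = 0 := by rw [two_smul]; nth_rewrite 2 [h]; simp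
    rcases smul_eq_zero.mp h2 with h' | h'
    · exact h2F h'
    · exact ne_zero_of_SL B h'
  refine ⟨⟨⟨B, htrB⟩, Subtype.ext hB⟩, ⟨⟨B * negOne, htrBneg⟩, Subtype.ext (by
      show (QuotientGroup.mk (B * negOne) : PSL2) = y.1
      rw [hmkneg, hB])⟩, ?_, ?_⟩
  · intro h
    apply hane
    have := congrArg (fun z => z.1.1.1) h
    simpa [hBneg] using this
  · ext z
    simp only [Set.mem_insert_iff, Set.mem_singleton_iff, Set.mem_univ, iff_true]
    have hz : (QuotientGroup.mk z.1.1 : PSL2) = QuotientGroup.mk B :=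
      (congrArg Subtype.val z.2).trans hB.symm
    have : z.1.1 * B⁻¹ ∈ Subgroup.center (Matrix.SpecialLinearGroup (Fin 2) F) := by
      rw [← QuotientGroup.eq_one_iff, QuotientGroup.mk_mul, QuotientGroup.mk_inv, hz,
        mul_inv_cancel]
    rcases (mem_center_iff' _).mp this with h | h
    · left
      have : z.1.1 * B⁻¹ = 1 := Subtype.ext h
      have hzB : z.1.1 = B := by
        have := congrArg (· * B) this
        simpa [mul_assoc] using this
      exact Subtype.ext (Subtype.ext hzB)
    · right
      have : z.1.1 * B⁻¹ = negOne := Subtype.ext h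
      have hzB : z.1.1 = negOne * B := by
        have := congrArg (· * B) this
        simpa [mul_assoc] using this
      have hcomm : negOne * B = B * negOne := Subtype.ext (by
        show (-1 : Matrix (Fin 2) (Fin 2) F) * B.1 = B.1 * (-1 : Matrix (Fin 2) (Fin 2) F)
        simp)
      exact Subtype.ext (Subtype.ext (hzB.trans hcomm))

lemma two_mul_card_inv (hchar : ringChar F ≠ 2) :
    Nat.card {A : SL2 // A.1.trace = 0} =
      2 * Nat.card {x : PSL2 // orderOf x = 2} := by
  classical
  have e : (Σ y : {x : PSL2 // orderOf x = 2},
      {A : {A : SL2 // A.1.trace = 0} // toInv hchar A = y}) ≃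
      {x : PSL2 // orderOf x = 2} × Fin 2 :=
    (Equiv.sigmaCongrRight fun y => Finite.equivFinOfCardEq (card_fiber_toInv hchar y)).trans
      (Equiv.sigmaEquivProd _ _)
  calc Nat.card {A : SL2 // A.1.trace = 0}
      = Nat.card (Σ y : {x : PSL2 // orderOf x = 2},
          {A : {A : SL2 // A.1.trace = 0} // toInv hchar A = y}) :=
        (Nat.card_congr (Equiv.sigmaFiberEquiv (toInv hchar))).symm
    _ = Nat.card ({x : PSL2 // orderOf x = 2} × Fin 2) := Nat.card_congr e
    _ = 2 * Nat.card {x : PSL2 // orderOf x = 2} := by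
        rw [Nat.card_prod]; simp [mul_comm]

lemma card_traceZero (hchar : ringChar F ≠ 2) :
    (Nat.card {A : SL2 // A.1.trace = 0} : ℤ) =
      Fintype.card F * Fintype.card F + quadraticChar F (-1) * Fintype.card F := by
  classical
  set q := Fintype.card F with hq
  have hq1 : 1 ≤ q := Fintype.card_pos
  have e : {A : SL2 // A.1.trace = 0} ≃
      Σ a : F, {bc : F × F // bc.1 * bc.2 = -(a ^ 2 + 1)} :=
    (traceZeroEquiv (F := F)).trans
      (Equiv.subtypeProdEquivSigmaSubtype (fun (a : F) (bc : F × F) => bc.1 * bc.2 = -(a ^ 2 + 1)))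
  rw [Nat.card_congr e, Nat.card_eq_fintype_card, Fintype.card_sigma]
  push_cast
  have hterm : ∀ a : F, (Fintype.card {bc : F × F // bc.1 * bc.2 = -(a ^ 2 + 1)} : ℤ)
      = if a ^ 2 = -1 then 2 * (q : ℤ) - 1 else (q : ℤ) - 1 := by
    intro a
    by_cases h : a ^ 2 = -1
    · have h0 : -(a ^ 2 + 1) = 0 := by rw [h]; ring
      rw [if_pos h, h0, card_fiber_zero]
      rw [← hq]
      push_cast [Nat.cast_sub (by omega : 1 ≤ 2 * q)]
      ring
    · have h0 : -(a ^ 2 + 1) ≠ 0 := fun hh => h (by linear_combination -hh)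
      rw [if_neg h, card_fiber_ne _ h0]
      rw [← hq]
      push_cast [Nat.cast_sub hq1]
      ring
  rw [Finset.sum_congr rfl (fun a _ => hterm a), Finset.sum_ite, Finset.sum_const,
    Finset.sum_const]
  set t := (Finset.univ.filter (fun a : F => a ^ 2 = -1)).card with ht
  set t' := (Finset.univ.filter (fun a : F => ¬ a ^ 2 = -1)).card with ht'
  have htt' : t + t' = q := by
    rw [ht, ht', hq, ← Finset.card_univ]
    exact Finset.card_filter_add_card_filter_not _
  have hcard : (t : ℤ) = quadraticChar F (-1) + 1 := by
    have := quadraticChar_card_sqrts hchar (-1 : F)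
    rw [Set.toFinset_setOf] at this
    rw [ht, this]
  have ht'' : (t' : ℤ) = (q : ℤ) - (quadraticChar F (-1) + 1) := by
    have : (t : ℤ) + t' = q := by exact_mod_cast htt'
    linarith [hcard]
  rw [nsmul_eq_mul, nsmul_eq_mul, hcard, ht'']
  ring
end CardInvAux

/-- For `q = p^n > 3` a power of an odd prime with `q ≡ ε (mod 8)` where
`ε = ±1`, the number of involutions of `PSL(2,q)` is `q(q+ε)/2`
(stated multiplicatively). -/
theorem card_involutions_PSL2 (p n q : ℕ) (hp : p.Prime) (hpodd : Odd p)
    (hn : 0 < n) (hq : q = p ^ n) (hq3 : 3 < q)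
    (F : Type*) [Field F] [Fintype F] (hF : Fintype.card F = q)
    (ε : ℤ) (hε : ε = 1 ∨ ε = -1) (hmod : (q : ℤ) ≡ ε [ZMOD 8]) :
    2 * (Nat.card {x : Matrix.SpecialLinearGroup (Fin 2) F ⧸
            Subgroup.center (Matrix.SpecialLinearGroup (Fin 2) F) //
          orderOf x = 2} : ℤ)
      = q * (q + ε) := by
  letI : DecidableEq F := Classical.decEq F
  have hqodd : Odd q := hq ▸ hpodd.pow
  have hq2 : q % 2 = 1 := Nat.odd_iff.mp hqodd
  have hchar : ringChar F ≠ 2 := by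
    intro h
    have := FiniteField.even_card_iff_char_two.mp h
    rw [hF] at this
    omega
  have h2 := CardInvAux.two_mul_card_inv (F := F) hchar
  have h3 := CardInvAux.card_traceZero (F := F) hchar
  have h8 : (q : ℤ) % 8 = ε % 8 := hmod
  have hχ : (quadraticChar F (-1) : ℤ) = ε := by
    rw [quadraticChar_neg_one hchar, hF, ZMod.χ₄_nat_eq_if_mod_four]
    rcases hε with rfl | rfl
    · have h4 : q % 4 = 1 := by omega
      rw [if_neg (by omega), if_pos h4]
    · have h4 : q % 4 = 3 := by omega
      rw [if_neg (by omega), if_neg (by omega)]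
  calc 2 * (Nat.card {x : Matrix.SpecialLinearGroup (Fin 2) F ⧸
            Subgroup.center (Matrix.SpecialLinearGroup (Fin 2) F) //
          orderOf x = 2} : ℤ)
      = (Nat.card {A : Matrix.SpecialLinearGroup (Fin 2) F // A.1.trace = 0} : ℤ) := by
        exact_mod_cast (congrArg (fun m : ℕ => (m : ℤ)) h2).symm
    _ = (q : ℤ) * q + ε * q := by rw [h3, hF, hχ]
    _ = q * (q + ε) := by ring
end

section
/- For an odd prime power q with q ≡ -1 (mod 4), the number of involutions in PSL(3,q) equals q^2(q^2+q+1). -/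
open Matrix

section Helpers

variable {F : Type*} [Field F] [Fintype F]

private lemma ord2_iff {M : Type*} [Monoid M] (x : M) :
    orderOf x = 2 ↔ x ^ 2 = 1 ∧ x ≠ 1 := by
  constructor
  · intro h
    refine ⟨h ▸ pow_orderOf_eq_one x, fun hx => by simp [hx] at h⟩
  · rintro ⟨h1, h2⟩
    haveI : Fact (Nat.Prime 2) := ⟨Nat.prime_two⟩
    exact orderOf_eq_prime h1 h2

/-- involutions in G/Z correspond to involutions in G when center is 3-torsion -/
private lemma card_invol_quotient (G : Type*) [Group G]
    (h3 : ∀ z ∈ Subgroup.center G, z ^ 3 = 1) :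
    Nat.card {x : G ⧸ Subgroup.center G // orderOf x = 2}
      = Nat.card {g : G // orderOf g = 2} := by
  have key : Function.Bijective
      (fun g : {g : G // orderOf g = 2} =>
        (⟨(g.val : G ⧸ Subgroup.center G), by
          obtain ⟨h1, h2⟩ := (ord2_iff _).mp g.prop
          rw [ord2_iff]
          constructor
          · rw [← QuotientGroup.mk_pow, h1]; rfl
          · intro hg
            have hmem : g.val ∈ Subgroup.center G := (QuotientGroup.eq_one_iff _).mp hg
            have : g.val = 1 := by
              have h3' := h3 _ hmem
              calc g.val = g.val ^ 2 * g.val := by rw [h1, one_mul]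
                _ = g.val ^ 3 := by group
                _ = 1 := h3'
            exact h2 this⟩ :
          {x : G ⧸ Subgroup.center G // orderOf x = 2})) := by
    constructor
    · rintro ⟨g, hg⟩ ⟨h, hh⟩ heq
      simp only [Subtype.mk.injEq] at heq ⊢
      have hz : g⁻¹ * h ∈ Subgroup.center G := QuotientGroup.eq.mp heq
      have hcomm := Subgroup.mem_center_iff.mp hz
      obtain ⟨hg1, hg2⟩ := (ord2_iff _).mp hg
      obtain ⟨hh1, hh2⟩ := (ord2_iff _).mp hh
      set z := g⁻¹ * h with hzdef
      have hhgz : h = g * z := by rw [hzdef]; group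
      have hz2 : z ^ 2 = 1 := by
        have e1 : h ^ 2 = g ^ 2 * z ^ 2 := by
          calc h ^ 2 = g * (z * g) * z := by rw [hhgz]; simp [pow_two, mul_assoc]
            _ = g * (g * z) * z := by rw [← hcomm g]
            _ = g ^ 2 * z ^ 2 := by simp [pow_two, mul_assoc]
        rw [hg1, one_mul] at e1
        rw [← e1, hh1]
      have hz1 : z = 1 := by
        calc z = z ^ 3 * (z ^ 2)⁻¹ := by group
          _ = 1 := by rw [h3 _ hz, hz2]; group
      rw [hhgz, hz1, mul_one]
    · rintro ⟨x, hx⟩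
      obtain ⟨hx1, hx2⟩ := (ord2_iff _).mp hx
      obtain ⟨g, rfl⟩ := QuotientGroup.mk_surjective x
      have hgsq : g ^ 2 ∈ Subgroup.center G := by
        rw [← QuotientGroup.eq_one_iff, QuotientGroup.mk_pow]
        exact hx1
      have h6 : (g ^ 3) ^ 2 = 1 := by
        have := h3 _ hgsq
        calc (g ^ 3) ^ 2 = (g ^ 2) ^ 3 := by group
          _ = 1 := this
      have hmk : ((g ^ 3 : G) : G ⧸ Subgroup.center G) = (g : G ⧸ Subgroup.center G) := by
        have h2' : ((g : G ⧸ Subgroup.center G)) ^ 2 = 1 := by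
          rw [← QuotientGroup.mk_pow, QuotientGroup.eq_one_iff]; exact hgsq
        rw [QuotientGroup.mk_pow]
        calc (g : G ⧸ Subgroup.center G) ^ 3
            = (g : G ⧸ Subgroup.center G) ^ 2 * (g : G ⧸ Subgroup.center G) := by group
          _ = (g : G ⧸ Subgroup.center G) := by rw [h2', one_mul]
      have hne : g ^ 3 ≠ 1 := by
        intro h
        apply hx2
        rw [← hmk, h]
        simp
      exact ⟨⟨g ^ 3, (ord2_iff _).mpr ⟨h6, hne⟩⟩, Subtype.ext hmk⟩
  exact (Nat.card_congr (Equiv.ofBijective _ key)).symm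

end Helpers

section MatrixLemmas

variable {F : Type*} [Field F] [Fintype F]

omit [Fintype F] in
private lemma det_two_smul_sub_one (v w : Fin 3 → F) :
    Matrix.det ((2 : F) • Matrix.vecMulVec v w - 1) = 2 * (w ⬝ᵥ v) - 1 := by
  rw [Matrix.det_fin_three]
  simp only [Matrix.sub_apply, Matrix.smul_apply, Matrix.vecMulVec_apply, Matrix.one_apply,
    smul_eq_mul, dotProduct, Fin.sum_univ_three]
  norm_num [Fin.ext_iff]
  ring

omit [Fintype F] in
private lemma det_two_smul_one_sub_sub_one (v w : Fin 3 → F) :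
    Matrix.det ((2 : F) • ((1 : Matrix (Fin 3) (Fin 3) F) - Matrix.vecMulVec v w) - 1)
      = 1 - 2 * (w ⬝ᵥ v) := by
  rw [Matrix.det_fin_three]
  simp only [Matrix.sub_apply, Matrix.smul_apply, Matrix.vecMulVec_apply, Matrix.one_apply,
    smul_eq_mul, dotProduct, Fin.sum_univ_three]
  norm_num [Fin.ext_iff]
  ring

omit [Fintype F] in
private lemma vecMulVec_mul_self (v w : Fin 3 → F) (h : w ⬝ᵥ v = 1) :
    Matrix.vecMulVec v w * Matrix.vecMulVec v w = Matrix.vecMulVec v w := by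
  have h' : w 0 * v 0 + w 1 * v 1 + w 2 * v 2 = 1 := by
    simpa [dotProduct, Fin.sum_univ_three] using h
  ext i j
  simp only [Matrix.mul_apply, Matrix.vecMulVec_apply, Fin.sum_univ_three]
  linear_combination (v i * w j) * h'

omit [Fintype F] in
private lemma invol_sq (v w : Fin 3 → F) (h : w ⬝ᵥ v = 1) :
    ((2 : F) • Matrix.vecMulVec v w - 1) * ((2 : F) • Matrix.vecMulVec v w - 1) = 1 := by
  set M := Matrix.vecMulVec v w with hM
  have expand : ((2 : F) • M - 1) * ((2 : F) • M - 1)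
      = ((2 : F) * 2) • (M * M) - (2 : F) • M - (2 : F) • M + 1 := by
    simp only [mul_sub, sub_mul, Matrix.smul_mul, Matrix.mul_smul, smul_smul, mul_one, one_mul]
    abel
  rw [expand, hM, vecMulVec_mul_self v w h]
  module

omit [Fintype F] in
private lemma invol_ne_one (h2 : (2 : F) ≠ 0) (v w : Fin 3 → F) (h : w ⬝ᵥ v = 1) :
    (2 : F) • Matrix.vecMulVec v w - 1 ≠ (1 : Matrix (Fin 3) (Fin 3) F) := by
  intro hEq
  have hE : ∀ i j : Fin 3, 2 * (v i * w j) - (if i = j then (1:F) else 0)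
      = (if i = j then (1:F) else 0) := by
    intro i j
    have := congr_fun (congr_fun hEq i) j
    simpa [Matrix.sub_apply, Matrix.smul_apply, Matrix.vecMulVec_apply, Matrix.one_apply,
      smul_eq_mul] using this
  have hd : ∀ i : Fin 3, v i * w i = 1 := by
    intro i
    have h1 := hE i i
    rw [if_pos rfl] at h1
    have h2' : 2 * (v i * w i) = 2 * 1 := by linear_combination h1
    exact mul_left_cancel₀ h2 h2'
  have ho : v 0 * w 1 = 0 := by
    have h1 := hE 0 1
    rw [if_neg (by decide)] at h1
    have h2' : 2 * (v 0 * w 1) = 0 := by linear_combination h1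
    rcases mul_eq_zero.mp h2' with h' | h'
    · exact absurd h' h2
    · exact h'
  have hv0 : v 0 ≠ 0 := left_ne_zero_of_mul_eq_one (hd 0)
  have hw1 : w 1 = 0 := by
    rcases mul_eq_zero.mp ho with h' | h'
    · exact absurd h' hv0
    · exact h'
  have := hd 1
  rw [hw1, mul_zero] at this
  exact zero_ne_one this

end MatrixLemmas

section Idem

variable {F : Type*} [Field F]

private lemma idem_rank_one (P : Matrix (Fin 3) (Fin 3) F) (hP : P * P = P)
    (hr : Module.finrank F (LinearMap.range (Matrix.toLin' P)) = 1) :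
    ∃ v w : Fin 3 → F, w ⬝ᵥ v = 1 ∧ P = Matrix.vecMulVec v w := by
  classical
  set f := Matrix.toLin' P with hf
  have hff : ∀ x, f (f x) = f x := by
    intro x
    have h1 : Matrix.toLin' (P * P) = Matrix.toLin' P := by rw [hP]
    rw [Matrix.toLin'_mul] at h1
    exact congr_fun (congr_arg (fun g => g.toFun) h1) x
  obtain ⟨v, hv0, hvgen⟩ := finrank_eq_one_iff'.mp hr
  -- v : range f, nonzero, generates
  have hvval : (v : Fin 3 → F) ≠ 0 := fun h => hv0 (Subtype.ext h)
  -- fixed points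
  have hfix : f (v : Fin 3 → F) = (v : Fin 3 → F) := by
    obtain ⟨u, hu⟩ := v.prop
    rw [← hu, hff]
  -- columns
  have hcol : ∀ j : Fin 3, ∃ c : F, ∀ i, P i j = c * (v : Fin 3 → F) i := by
    intro j
    have hmem : f (Pi.single j 1) ∈ LinearMap.range f := LinearMap.mem_range_self f _
    obtain ⟨c, hc⟩ := hvgen ⟨f (Pi.single j 1), hmem⟩
    refine ⟨c, fun i => ?_⟩
    have := congr_fun (congr_arg Subtype.val hc) i
    simp only [Submodule.coe_smul, Pi.smul_apply, smul_eq_mul] at this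
    rw [this, hf, Matrix.toLin'_apply, Matrix.mulVec_single]
    simp
  choose wf hwf using hcol
  refine ⟨(v : Fin 3 → F), wf, ?_, ?_⟩
  · -- dot product 1
    obtain ⟨i, hvi⟩ := Function.ne_iff.mp hvval
    have hmv : P.mulVec (v : Fin 3 → F) = (v : Fin 3 → F) := by
      rw [← Matrix.toLin'_apply, ← hf, hfix]
    have := congr_fun hmv i
    rw [Matrix.mulVec, dotProduct] at this
    have hsum : ∑ j, P i j * (v : Fin 3 → F) j
        = (v : Fin 3 → F) i * (wf ⬝ᵥ (v : Fin 3 → F)) := by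
      rw [dotProduct, Finset.mul_sum]
      refine Finset.sum_congr rfl fun j _ => ?_
      rw [hwf j i]
      ring
    rw [hsum] at this
    have : (v : Fin 3 → F) i * (wf ⬝ᵥ (v : Fin 3 → F)) = (v : Fin 3 → F) i * 1 := by
      rw [this, mul_one]
    exact mul_left_cancel₀ hvi this
  · ext i j
    rw [Matrix.vecMulVec_apply, hwf j i]
    ring

end Idem

section Form

variable {F : Type*} [Field F]

private lemma invol_form (h2 : (2 : F) ≠ 0) (A : Matrix (Fin 3) (Fin 3) F)
    (hA2 : A * A = 1) (hdet : A.det = 1) (hA1 : A ≠ 1) :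
    ∃ v w : Fin 3 → F, w ⬝ᵥ v = 1 ∧ A = (2 : F) • Matrix.vecMulVec v w - 1 := by
  classical
  have hn1 : (-1 : F) ≠ 1 := by
    intro h
    apply h2
    linear_combination -h
  set P := (2 : F)⁻¹ • ((1 : Matrix (Fin 3) (Fin 3) F) + A) with hPdef
  have h2i : (2 : F)⁻¹ * 2 = 1 := inv_mul_cancel₀ h2
  have hAP : A = (2 : F) • P - 1 := by
    rw [hPdef, smul_smul, mul_inv_cancel₀ h2, one_smul]
    abel
  have hP : P * P = P := by
    rw [hPdef, Matrix.smul_mul, Matrix.mul_smul, smul_smul]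
    have hexp : ((1 : Matrix (Fin 3) (Fin 3) F) + A) * (1 + A) = (2 : F) • (1 + A) := by
      simp only [mul_add, add_mul, one_mul, mul_one, hA2]
      module
    rw [hexp, smul_smul]
    congr 1
    rw [mul_assoc, h2i, mul_one]
  set f := Matrix.toLin' P with hf
  have hff : ∀ x, f (f x) = f x := by
    intro x
    have h1 : Matrix.toLin' (P * P) = Matrix.toLin' P := by rw [hP]
    rw [Matrix.toLin'_mul] at h1
    exact congr_fun (congr_arg (fun g => g.toFun) h1) x
  have hrsum : Module.finrank F (LinearMap.range f) + Module.finrank F (LinearMap.ker f) = 3 := by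
    have := LinearMap.finrank_range_add_finrank_ker f
    rwa [Module.finrank_fintype_fun_eq_card, Fintype.card_fin] at this
  -- the complementary idempotent
  set Q := (1 : Matrix (Fin 3) (Fin 3) F) - P with hQdef
  have hQ : Q * Q = Q := by
    rw [hQdef]
    simp only [mul_sub, sub_mul, one_mul, mul_one, hP]
    abel
  have hQrange : LinearMap.range (Matrix.toLin' Q) = LinearMap.ker f := by
    have htQ : Matrix.toLin' Q = LinearMap.id - f := by
      rw [hQdef, map_sub, Matrix.toLin'_one, hf]
    ext x
    constructor
    · rintro ⟨y, rfl⟩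
      rw [LinearMap.mem_ker, htQ]
      simp only [LinearMap.sub_apply, LinearMap.id_apply, map_sub, hff]
      exact sub_self _
    · intro hx
      rw [LinearMap.mem_ker] at hx
      exact ⟨x, by rw [htQ]; simp [hx]⟩
  have hrle : Module.finrank F (LinearMap.range f) ≤ 3 := by omega
  interval_cases hr : Module.finrank F (LinearMap.range f)
  · -- rank 0 : A = -1, det = -1, contradiction
    exfalso
    have hbot : LinearMap.range f = ⊥ := Submodule.finrank_eq_zero.mp hr
    have hf0 : f = 0 := LinearMap.range_eq_bot.mp hbot
    have hP0 : P = 0 := by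
      have : Matrix.toLin' P = Matrix.toLin' (0 : Matrix (Fin 3) (Fin 3) F) := by
        rw [← hf, hf0, map_zero]
      exact Matrix.toLin'.injective this
    rw [hP0, smul_zero, zero_sub] at hAP
    rw [hAP] at hdet
    rw [Matrix.det_neg, Matrix.det_one] at hdet
    simp only [Fintype.card_fin, mul_one] at hdet
    norm_num at hdet
    exact hn1 (by linear_combination hdet)
  · -- rank 1
    obtain ⟨v, w, hw, hPvw⟩ := idem_rank_one P hP (by rw [← hf]; exact hr)
    exact ⟨v, w, hw, by rw [hAP, hPvw]⟩
  · -- rank 2 : det = -1, contradiction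
    exfalso
    have hQrank : Module.finrank F (LinearMap.range (Matrix.toLin' Q)) = 1 := by
      rw [hQrange]; omega
    obtain ⟨v, w, hw, hQvw⟩ := idem_rank_one Q hQ hQrank
    have hPQ : P = 1 - Matrix.vecMulVec v w := by
      rw [← hQvw, hQdef, sub_sub_cancel]
    rw [hAP, hPQ] at hdet
    rw [det_two_smul_one_sub_sub_one, hw] at hdet
    exact hn1 (by linear_combination hdet)
  · -- rank 3 : A = 1, contradiction
    exfalso
    have htop : LinearMap.range f = ⊤ := by
      apply Submodule.eq_top_of_finrank_eq
      rw [hr, Module.finrank_fintype_fun_eq_card, Fintype.card_fin]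
    have hfix : ∀ x, f x = x := by
      intro x
      have hx : x ∈ LinearMap.range f := htop ▸ Submodule.mem_top
      obtain ⟨y, rfl⟩ := hx
      exact hff y
    have hP1 : P = 1 := by
      have : Matrix.toLin' P = Matrix.toLin' (1 : Matrix (Fin 3) (Fin 3) F) := by
        rw [Matrix.toLin'_one, ← hf]
        refine LinearMap.ext fun x => ?_
        simpa using hfix x
      exact Matrix.toLin'.injective this
    apply hA1
    rw [hAP, hP1]
    ext i j
    simp only [Matrix.sub_apply, Matrix.smul_apply, Matrix.one_apply, smul_eq_mul]
    split_ifs <;> ring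

end Form

section Count

variable {F : Type*} [Field F] [Fintype F]

private lemma card_dual_fiber (v : Fin 3 → F) (hv : v ≠ 0) :
    Nat.card {w : Fin 3 → F // w ⬝ᵥ v = 1} = Fintype.card F ^ 2 := by
  classical
  obtain ⟨i, hvi⟩ := Function.ne_iff.mp hv
  simp only [Pi.zero_apply] at hvi
  set φ : (Fin 3 → F) →ₗ[F] F :=
    { toFun := fun w => w ⬝ᵥ v
      map_add' := fun a b => add_dotProduct a b v
      map_smul' := fun c a => smul_dotProduct c a v } with hφ
  have hφapp : ∀ w, φ w = w ⬝ᵥ v := fun _ => rfl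
  set w₀ : Fin 3 → F := (v i)⁻¹ • (Pi.single i 1 : Fin 3 → F) with hw₀def
  have hw₀ : φ w₀ = 1 := by
    rw [hφapp, hw₀def, smul_dotProduct, single_dotProduct, smul_eq_mul,
      one_mul, inv_mul_cancel₀ hvi]
  have hsurj : Function.Surjective φ := by
    intro c
    exact ⟨c • w₀, by rw [_root_.map_smul, hw₀, smul_eq_mul, mul_one]⟩
  have hkr : Module.finrank F (LinearMap.ker φ) = 2 := by
    have h1 := LinearMap.finrank_range_add_finrank_ker φ
    rw [LinearMap.range_eq_top.mpr hsurj, finrank_top, Module.finrank_self,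
      Module.finrank_fintype_fun_eq_card, Fintype.card_fin] at h1
    omega
  have e : {w : Fin 3 → F // w ⬝ᵥ v = 1} ≃ LinearMap.ker φ :=
    { toFun := fun w => ⟨w.val - w₀, by
        rw [LinearMap.mem_ker, map_sub, hw₀, hφapp, w.prop, sub_self]⟩
      invFun := fun u => ⟨u.val + w₀, by
        have hu : φ u.val = 0 := u.prop
        rw [← hφapp, map_add, hu, hw₀, zero_add]⟩
      left_inv := fun w => by ext; simp
      right_inv := fun u => by ext; simp }
  rw [Nat.card_congr e]
  haveI : Fintype (LinearMap.ker φ) := Fintype.ofFinite _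
  rw [Nat.card_eq_fintype_card, Module.card_eq_pow_finrank (K := F), hkr]

private lemma card_SL3_invol (h2 : (2 : F) ≠ 0) :
    Nat.card {g : Matrix.SpecialLinearGroup (Fin 3) F // orderOf g = 2} * (Fintype.card F - 1)
      = (Fintype.card F ^ 3 - 1) * Fintype.card F ^ 2 := by
  classical
  set T := {p : (Fin 3 → F) × (Fin 3 → F) // p.2 ⬝ᵥ p.1 = 1} with hT
  set S := {g : Matrix.SpecialLinearGroup (Fin 3) F // orderOf g = 2} with hS
  have hdet1 : ∀ p : T, ((2 : F) • Matrix.vecMulVec p.val.1 p.val.2 - 1).det = 1 := by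
    intro p
    rw [det_two_smul_sub_one, p.prop]
    ring
  set Φ : T → S := fun p =>
    ⟨⟨(2 : F) • Matrix.vecMulVec p.val.1 p.val.2 - 1, hdet1 p⟩, by
      apply (ord2_iff _).mpr
      refine ⟨?_, ?_⟩
      · apply Subtype.ext
        simp only [pow_two, Matrix.SpecialLinearGroup.coe_mul, Matrix.SpecialLinearGroup.coe_one]
        show ((2 : F) • Matrix.vecMulVec p.val.1 p.val.2 - 1) ^ 2 = 1
        rw [pow_two]
        exact invol_sq p.val.1 p.val.2 p.prop
      · intro hg
        exact invol_ne_one h2 p.val.1 p.val.2 p.prop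
          (by simpa using congr_arg Subtype.val hg)⟩ with hΦ
  have fiberEquiv : ∀ g : S, Nonempty ({t : T // Φ t = g} ≃ Fˣ) := by
    intro g
    set A := (g.val.val : Matrix (Fin 3) (Fin 3) F) with hA
    obtain ⟨hg2, hg1⟩ := (ord2_iff _).mp g.prop
    have hA2 : A * A = 1 := by
      have h := congr_arg (fun x : Matrix.SpecialLinearGroup (Fin 3) F =>
        (x : Matrix (Fin 3) (Fin 3) F)) hg2
      simpa [pow_two] using h
    have hA1 : A ≠ 1 := by
      intro h
      exact hg1 (Subtype.ext (by simpa using h))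
    obtain ⟨v₀, w₀, h₀, hAform⟩ := invol_form h2 A hA2 g.val.prop hA1
    have hmem : ∀ t : T, Φ t = g ↔
        Matrix.vecMulVec t.val.1 t.val.2 = Matrix.vecMulVec v₀ w₀ := by
      intro t
      constructor
      · intro h
        have h' : (2 : F) • Matrix.vecMulVec t.val.1 t.val.2 - 1 = A :=
          congr_arg (fun x : S => (x.val.val : Matrix (Fin 3) (Fin 3) F)) h
        rw [hAform] at h'
        exact smul_right_injective _ h2 (sub_left_inj.mp h')
      · intro h
        apply Subtype.ext
        apply Subtype.ext
        show (2 : F) • Matrix.vecMulVec t.val.1 t.val.2 - 1 = A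
        rw [h, hAform]
    have hv₀ : v₀ ≠ 0 := by
      intro h
      rw [h, dotProduct_zero] at h₀
      exact one_ne_zero h₀.symm
    obtain ⟨iv, hiv⟩ := Function.ne_iff.mp hv₀
    simp only [Pi.zero_apply] at hiv
    set θ : Fˣ → {t : T // Φ t = g} := fun c =>
      ⟨⟨((c : F) • v₀, ((c : F))⁻¹ • w₀), by
          show (((c : F))⁻¹ • w₀) ⬝ᵥ ((c : F) • v₀) = 1
          rw [smul_dotProduct, dotProduct_smul, smul_eq_mul, smul_eq_mul,
            ← mul_assoc, inv_mul_cancel₀ c.ne_zero, one_mul, h₀]⟩, by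
        rw [hmem]
        ext i j
        simp only [Matrix.vecMulVec_apply, Pi.smul_apply, smul_eq_mul]
        field_simp⟩ with hθ
    have hbij : Function.Bijective θ := by
      constructor
      · intro c c' hcc
        have h1 : (c : F) • v₀ = (c' : F) • v₀ :=
          congr_arg (fun t : {t : T // Φ t = g} => t.val.val.1) hcc
        have h2' : (c : F) * v₀ iv = (c' : F) * v₀ iv := congr_fun h1 iv
        exact Units.ext (mul_right_cancel₀ hiv h2')
      · rintro ⟨⟨⟨v, w⟩, ht⟩, htmem⟩
        have hvw : Matrix.vecMulVec v w = Matrix.vecMulVec v₀ w₀ := (hmem _).mp htmem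
        have hE : ∀ i j, v i * w j = v₀ i * w₀ j := by
          intro i j
          have := congr_fun (congr_fun hvw i) j
          simpa [Matrix.vecMulVec_apply] using this
        have ht' : w ⬝ᵥ v = 1 := ht
        have hex : ∃ i, w i * v i ≠ 0 := by
          by_contra hall
          push_neg at hall
          have : w ⬝ᵥ v = 0 := Finset.sum_eq_zero fun i _ => hall i
          rw [ht'] at this
          exact one_ne_zero this
        obtain ⟨i₀, hi₀⟩ := hex
        have hwI : w i₀ ≠ 0 := left_ne_zero_of_mul hi₀
        have hvI : v i₀ ≠ 0 := right_ne_zero_of_mul hi₀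
        have h1 : v i₀ * w i₀ = v₀ i₀ * w₀ i₀ := hE i₀ i₀
        have hprod₀ : v₀ i₀ * w₀ i₀ ≠ 0 := by
          rw [← h1]
          exact mul_ne_zero hvI hwI
        have hv0I : v₀ i₀ ≠ 0 := left_ne_zero_of_mul hprod₀
        have hw0I : w₀ i₀ ≠ 0 := right_ne_zero_of_mul hprod₀
        have hc : v i₀ / v₀ i₀ ≠ 0 := div_ne_zero hvI hv0I
        refine ⟨Units.mk0 (v i₀ / v₀ i₀) hc, ?_⟩
        apply Subtype.ext
        apply Subtype.ext
        show ((((Units.mk0 (v i₀ / v₀ i₀) hc : Fˣ) : F)) • v₀,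
          (((Units.mk0 (v i₀ / v₀ i₀) hc : Fˣ) : F))⁻¹ • w₀) = (v, w)
        have hcoe : ((Units.mk0 (v i₀ / v₀ i₀) hc : Fˣ) : F) = v i₀ / v₀ i₀ := rfl
        rw [hcoe]
        refine Prod.ext ?_ ?_
        · show (v i₀ / v₀ i₀) • v₀ = v
          funext i
          show (v i₀ / v₀ i₀) * v₀ i = v i
          have key : (v i₀ * v₀ i - v i * v₀ i₀) * w i₀ = 0 := by
            linear_combination v₀ i * h1 - v₀ i₀ * hE i i₀
          have key2 : v i₀ * v₀ i - v i * v₀ i₀ = 0 :=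
            (mul_eq_zero.mp key).resolve_right hwI
          field_simp
          linear_combination key2
        · show ((v i₀ / v₀ i₀))⁻¹ • w₀ = w
          funext j
          show ((v i₀ / v₀ i₀))⁻¹ * w₀ j = w j
          rw [inv_div]
          field_simp
          linear_combination -hE i₀ j
    exact ⟨(Equiv.ofBijective θ hbij).symm⟩
  -- an equivalence T ≃ S × Fˣ
  have eTS : T ≃ S × Fˣ :=
    ((Equiv.sigmaFiberEquiv Φ).symm.trans
      (Equiv.sigmaCongrRight fun g => (fiberEquiv g).some)).trans
      (Equiv.sigmaEquivProd S Fˣ)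
  -- an equivalence T ≃ Σ v ≠ 0, dual fiber
  have eTV : T ≃ Σ v : {v : Fin 3 → F // v ≠ 0}, {w : Fin 3 → F // w ⬝ᵥ v.val = 1} :=
    { toFun := fun t => ⟨⟨t.val.1, by
        intro h
        have ht : t.val.2 ⬝ᵥ t.val.1 = 1 := t.prop
        rw [h, dotProduct_zero] at ht
        exact one_ne_zero ht.symm⟩, ⟨t.val.2, t.prop⟩⟩
      invFun := fun s => ⟨(s.1.val, s.2.val), s.2.prop⟩
      left_inv := fun t => rfl
      right_inv := fun s => rfl }
  -- count both sides
  have count1 : Nat.card T = Nat.card S * (Fintype.card F - 1) := by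
    rw [Nat.card_congr eTS, Nat.card_prod]
    congr 1
    rw [Nat.card_eq_fintype_card, Fintype.card_units]
  have count2 : Nat.card T = (Fintype.card F ^ 3 - 1) * Fintype.card F ^ 2 := by
    rw [Nat.card_congr eTV]
    haveI : ∀ v : {v : Fin 3 → F // v ≠ 0},
        Fintype {w : Fin 3 → F // w ⬝ᵥ v.val = 1} := fun v => Fintype.ofFinite _
    rw [Nat.card_eq_fintype_card, Fintype.card_sigma]
    have hfib : ∀ v : {v : Fin 3 → F // v ≠ 0},
        Fintype.card {w : Fin 3 → F // w ⬝ᵥ v.val = 1} = Fintype.card F ^ 2 := by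
      intro v
      rw [← Nat.card_eq_fintype_card]
      exact card_dual_fiber v.val v.prop
    rw [Finset.sum_congr rfl fun v _ => hfib v, Finset.sum_const, smul_eq_mul,
      Finset.card_univ]
    congr 1
    have : Fintype.card {v : Fin 3 → F // v ≠ 0}
        = Fintype.card (Fin 3 → F) - Fintype.card {v : Fin 3 → F // v = 0} :=
      Fintype.card_subtype_compl _
    rw [this, Fintype.card_subtype_eq, Fintype.card_fun, Fintype.card_fin]
  rw [← count1, count2]

end Count

private lemma center_cube {F : Type*} [Field F] [Fintype F]
    (z : Matrix.SpecialLinearGroup (Fin 3) F)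
    (hz : z ∈ Subgroup.center (Matrix.SpecialLinearGroup (Fin 3) F)) : z ^ 3 = 1 := by
  obtain ⟨r, hr, hsc⟩ := Matrix.SpecialLinearGroup.mem_center_iff.mp hz
  rw [Fintype.card_fin] at hr
  apply Subtype.ext
  rw [Matrix.SpecialLinearGroup.coe_pow, ← hsc, ← map_pow, hr, _root_.map_one]
  rfl

/-- For an odd prime power `q` with `q ≡ -1 (mod 4)`, the number of involutions
of `PSL(3,q)` is `q²(q² + q + 1)`. -/
theorem card_involutions_PSL3 (p n q : ℕ) (hp : p.Prime) (hpodd : Odd p)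
    (hn : 0 < n) (hq : q = p ^ n) (hmod : q % 4 = 3)
    (F : Type*) [Field F] [Fintype F] (hF : Fintype.card F = q) :
    Nat.card {x : Matrix.SpecialLinearGroup (Fin 3) F ⧸
          Subgroup.center (Matrix.SpecialLinearGroup (Fin 3) F) //
        orderOf x = 2}
      = q ^ 2 * (q ^ 2 + q + 1) := by
  classical
  have h2 : (2 : F) ≠ 0 := by
    apply Ring.two_ne_zero
    intro hch
    have := FiniteField.even_card_iff_char_two.mp hch
    rw [hF] at this
    omega
  rw [card_invol_quotient _ (fun z hz => center_cube z hz)]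
  have key := card_SL3_invol (F := F) h2
  rw [hF] at key
  -- arithmetic
  have hq3 : 3 ≤ q := by
    have hp3 : 3 ≤ p := by
      rcases hp.two_le.lt_or_eq with h | h
      · omega
      · exfalso
        rw [← h] at hpodd
        exact (Nat.not_odd_iff_even.mpr even_two) hpodd
    calc 3 ≤ p := hp3
      _ = p ^ 1 := (pow_one p).symm
      _ ≤ p ^ n := Nat.pow_le_pow_right (by omega) hn
      _ = q := hq.symm
  obtain ⟨m, rfl⟩ : ∃ m, q = m + 1 := ⟨q - 1, by omega⟩
  have hm2 : 2 ≤ m := by omega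
  rw [Nat.add_sub_cancel] at key
  have e : (m + 1) ^ 3 = m * ((m + 1) ^ 2 + (m + 1) + 1) + 1 := by ring
  rw [e, Nat.add_sub_cancel] at key
  apply Nat.eq_of_mul_eq_mul_right (show 0 < m by omega)
  rw [key]
  ring
end
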